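/- Let (Ω, ℱ, (ℱ_s), ℙ) be a filtered probability space carrying ℝ^k-valued adapted processes (F_s) and (ℓ_s) and a real adapted process (y_s) satisfying Assumption 1 with functions 𝒜, ℬ_i (i = 1,…,p), 𝒞_j (j = 1,…,q), let r ∈ ℝ, ν₁ ∈ ℝ^k, ν₂ ∈ ℝ, and let M_{s,s+1} denote the stochastic discount factor. If 𝒜(1−ν₂, −ν₁, 0) = r + 𝒜(−ν₂, −ν₁, 0), ℬ_i(1−ν₂, −ν₁, 0) = ℬ_i(−ν₂, −ν₁, 0) for all i = 1,…,p, and 𝒞_j(1−ν₂, −ν₁, 0) = 𝒞_j(−ν₂, −ν₁, 0) for all j = 1,…,q, then for every s one has 𝔼[M_{s,s+1} e^{y_{s+1}} | ℱ_s] = e^r almost surely (the no-arbitrage condition). -/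

import Mathlib

open MeasureTheory ProbabilityTheory Real

/-- Scalar product in `ℝ^k`. -/
def dotk {k : ℕ} (a b : Fin k → ℝ) : ℝ := ∑ i, a i * b i

lemma dotk_zero_left {k : ℕ} (b : Fin k → ℝ) : dotk (0 : Fin k → ℝ) b = 0 := by
  simp [dotk]

lemma dotk_neg_left {k : ℕ} (a b : Fin k → ℝ) : dotk (-a) b = -dotk a b := by
  simp [dotk, Finset.sum_neg_distrib]

/-- If `φ ≥ 0` is `m`-measurable, `g ≥ 0` is integrable and `φ ⬝ 𝔼[g|m]` is a.e. equal to a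
constant, then `φ ⬝ g` is integrable. -/
lemma integrable_mul_of_condexp_bound
    {Ω : Type*} {m m0 : MeasurableSpace Ω} (hm : m ≤ m0) {μ : Measure Ω}
    [IsFiniteMeasure μ] {φ g : Ω → ℝ} (hφm : StronglyMeasurable[m] φ)
    (hφ0 : ∀ ω, 0 ≤ φ ω) (hg0 : ∀ ω, 0 ≤ g ω) (hg : Integrable g μ) {C : ℝ}
    (hC : (fun ω => φ ω * (μ[g|m]) ω) =ᵐ[μ] fun _ => C) :
    Integrable (fun ω => φ ω * g ω) μ := by
  have hφmeas : AEStronglyMeasurable φ μ := (hφm.mono hm).aestronglyMeasurable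
  refine ⟨hφmeas.mul hg.1, ?_⟩
  rw [hasFiniteIntegral_iff_ofReal
    (Filter.Eventually.of_forall fun ω => mul_nonneg (hφ0 ω) (hg0 ω))]
  set φn : ℕ → Ω → ℝ := fun n ω => min (φ ω) n with hφn
  have hφn_meas : ∀ n, StronglyMeasurable[m] (φn n) :=
    fun n => (hφm.measurable.min measurable_const).stronglyMeasurable
  have hφn_nonneg : ∀ n ω, 0 ≤ φn n ω := fun n ω => le_min (hφ0 ω) (n.cast_nonneg)
  have hφn_le : ∀ n ω, φn n ω ≤ φ ω := fun n ω => min_le_left _ _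
  have hφn_bdd : ∀ n, ∀ᵐ ω ∂μ, ‖φn n ω‖ ≤ (n : ℝ) := fun n =>
    Filter.Eventually.of_forall fun ω => by
      rw [Real.norm_eq_abs, abs_of_nonneg (hφn_nonneg n ω)]; exact min_le_right _ _
  have hint_n : ∀ n, Integrable (fun ω => φn n ω * g ω) μ := fun n =>
    hg.bdd_mul ((hφn_meas n).mono hm).aestronglyMeasurable (hφn_bdd n)
  have hE0 : (0 : Ω → ℝ) ≤ᵐ[μ] μ[g|m] := condExp_nonneg (Filter.Eventually.of_forall hg0)
  have hEn : ∀ n, Integrable (fun ω => φn n ω * (μ[g|m]) ω) μ := fun n =>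
    integrable_condExp.bdd_mul ((hφn_meas n).mono hm).aestronglyMeasurable (hφn_bdd n)
  have hpull : ∀ n, (μ[fun ω => φn n ω * g ω|m]) =ᵐ[μ] fun ω => φn n ω * (μ[g|m]) ω := by
    intro n
    exact condExp_stronglyMeasurable_mul_of_bound hm (hφn_meas n) hg n (hφn_bdd n)
  have hbound_int : ∀ n, ∫ ω, φn n ω * g ω ∂μ ≤ C * (μ Set.univ).toReal := by
    intro n
    have h4 : (fun ω => φn n ω * (μ[g|m]) ω) ≤ᵐ[μ] fun _ => C := by
      filter_upwards [hC, hE0] with ω h1 h2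
      calc φn n ω * (μ[g|m]) ω ≤ φ ω * (μ[g|m]) ω :=
            mul_le_mul_of_nonneg_right (hφn_le n ω) h2
        _ = C := h1
    calc ∫ ω, φn n ω * g ω ∂μ
        = ∫ ω, (μ[fun ω => φn n ω * g ω|m]) ω ∂μ := (integral_condExp hm).symm
      _ = ∫ ω, φn n ω * (μ[g|m]) ω ∂μ := integral_congr_ae (hpull n)
      _ ≤ ∫ _, C ∂μ := integral_mono_ae (hEn n) (integrable_const C) h4
      _ = C * (μ Set.univ).toReal := by rw [integral_const, smul_eq_mul]; simp only [Measure.real]; ring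
  have key : ∀ ω, (⨆ n, ENNReal.ofReal (φn n ω * g ω)) = ENNReal.ofReal (φ ω * g ω) := by
    intro ω
    apply le_antisymm
    · exact iSup_le fun n => ENNReal.ofReal_le_ofReal
        (mul_le_mul_of_nonneg_right (hφn_le n ω) (hg0 ω))
    · refine le_iSup_of_le ⌈φ ω⌉₊ ?_
      have : φn ⌈φ ω⌉₊ ω = φ ω := min_eq_left (Nat.le_ceil _)
      rw [this]
  have hmono : ∀ ω, Monotone fun n => ENNReal.ofReal (φn n ω * g ω) := fun ω a b hab =>
    ENNReal.ofReal_le_ofReal (mul_le_mul_of_nonneg_right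
      (min_le_min le_rfl (Nat.cast_le.2 hab)) (hg0 ω))
  calc ∫⁻ ω, ENNReal.ofReal (φ ω * g ω) ∂μ
      = ∫⁻ ω, ⨆ n, ENNReal.ofReal (φn n ω * g ω) ∂μ := by simp_rw [key]
    _ = ⨆ n, ∫⁻ ω, ENNReal.ofReal (φn n ω * g ω) ∂μ :=
        lintegral_iSup' (fun n => ((hint_n n).1.aemeasurable).ennreal_ofReal)
          (Filter.Eventually.of_forall hmono)
    _ ≤ ⨆ _ : ℕ, ENNReal.ofReal (C * (μ Set.univ).toReal) := by
        refine iSup_mono fun n => ?_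
        rw [← ofReal_integral_eq_lintegral_ofReal (hint_n n)
          (Filter.Eventually.of_forall fun ω => mul_nonneg (hφn_nonneg n ω) (hg0 ω))]
        exact ENNReal.ofReal_le_ofReal (hbound_int n)
    _ = ENNReal.ofReal (C * (μ Set.univ).toReal) := iSup_const
    _ < ⊤ := ENNReal.ofReal_lt_top

/-- Under Assumption 1, if the functions `𝒜`, `ℬᵢ`, `𝒞ⱼ` satisfy the
restrictions `𝒜(1−ν₂,−ν₁,0) = r + 𝒜(−ν₂,−ν₁,0)`, `ℬᵢ(1−ν₂,−ν₁,0) = ℬᵢ(−ν₂,−ν₁,0)` and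
`𝒞ⱼ(1−ν₂,−ν₁,0) = 𝒞ⱼ(−ν₂,−ν₁,0)`, then the exponential-affine stochastic discount factor
satisfies the no-arbitrage condition `𝔼[M_{s,s+1} e^{y_{s+1}} | ℱ_s] = e^r` a.s. -/
theorem sdf_no_arbitrage
    {Ω : Type*} {m0 : MeasurableSpace Ω} {μ : Measure Ω} [IsProbabilityMeasure μ]
    (ℱ : Filtration ℤ m0) {k p q : ℕ} (hp : 0 < p) (hq : 0 < q)
    (F L : ℤ → Ω → (Fin k → ℝ)) (y : ℤ → Ω → ℝ)
    -- the processes are adapted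
    (hFad : ∀ s : ℤ, StronglyMeasurable[ℱ s] (F s))
    (hLad : ∀ s : ℤ, StronglyMeasurable[ℱ s] (L s))
    (hyad : ∀ s : ℤ, StronglyMeasurable[ℱ s] (y s))
    -- Assumption 1
    (𝒜 : ℝ → (Fin k → ℝ) → (Fin k → ℝ) → ℝ)
    (ℬ : ℝ → (Fin k → ℝ) → (Fin k → ℝ) → Fin p → (Fin k → ℝ))
    (𝒞 : ℝ → (Fin k → ℝ) → (Fin k → ℝ) → Fin q → (Fin k → ℝ))
    (hint : ∀ (s : ℤ) (z : ℝ) (b c : Fin k → ℝ),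
      Integrable (fun ω =>
        Real.exp (z * y (s + 1) ω + dotk b (F (s + 1) ω) + dotk c (L (s + 1) ω))) μ)
    (haff : ∀ (s : ℤ) (z : ℝ) (b c : Fin k → ℝ),
      (μ[fun ω =>
          Real.exp (z * y (s + 1) ω + dotk b (F (s + 1) ω) + dotk c (L (s + 1) ω)) | ℱ s])
        =ᵐ[μ] fun ω => Real.exp (𝒜 z b c
          + ∑ i : Fin p, dotk (ℬ z b c i) (F (s - (i : ℕ)) ω)
          + ∑ j : Fin q, dotk (𝒞 z b c j) (L (s - (j : ℕ)) ω)))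
    (h𝒜0 : 𝒜 0 0 0 = 0) (hℬ0 : ∀ i, ℬ 0 0 0 i = 0) (h𝒞0 : ∀ j, 𝒞 0 0 0 j = 0)
    -- the stochastic discount factor
    (r : ℝ) (ν₁ : Fin k → ℝ) (ν₂ : ℝ)
    (M : ℤ → Ω → ℝ)
    (hM : ∀ s : ℤ, M s =ᵐ[μ] fun ω =>
      Real.exp (-dotk ν₁ (F (s + 1) ω) - ν₂ * y (s + 1) ω) /
        (μ[fun ω' => Real.exp (-dotk ν₁ (F (s + 1) ω') - ν₂ * y (s + 1) ω') | ℱ s]) ω)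
    -- the no-arbitrage restrictions on 𝒜, ℬᵢ, 𝒞ⱼ
    (h𝒜 : 𝒜 (1 - ν₂) (-ν₁) 0 = r + 𝒜 (-ν₂) (-ν₁) 0)
    (hℬ : ∀ i : Fin p, ℬ (1 - ν₂) (-ν₁) 0 i = ℬ (-ν₂) (-ν₁) 0 i)
    (h𝒞 : ∀ j : Fin q, 𝒞 (1 - ν₂) (-ν₁) 0 j = 𝒞 (-ν₂) (-ν₁) 0 j) :
    ∀ s : ℤ, (μ[fun ω => M s ω * Real.exp (y (s + 1) ω) | ℱ s])
      =ᵐ[μ] fun _ => Real.exp r := by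
  intro s
  -- the two exponential payoffs
  set g₀ : Ω → ℝ := fun ω =>
    Real.exp ((-ν₂) * y (s + 1) ω + dotk (-ν₁) (F (s + 1) ω) + dotk 0 (L (s + 1) ω)) with hg₀
  set g₁ : Ω → ℝ := fun ω =>
    Real.exp ((1 - ν₂) * y (s + 1) ω + dotk (-ν₁) (F (s + 1) ω) + dotk 0 (L (s + 1) ω)) with hg₁
  -- the denominator function in `hM` is exactly `g₀`
  have hg₀eq : (fun ω => Real.exp (-dotk ν₁ (F (s + 1) ω) - ν₂ * y (s + 1) ω)) = g₀ := by
    funext ω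
    rw [hg₀]
    simp only [dotk_neg_left, dotk_zero_left]
    congr 1
    ring
  -- conditional expectation of the denominator
  set S : Ω → ℝ := fun ω =>
    ∑ i : Fin p, dotk (ℬ (-ν₂) (-ν₁) 0 i) (F (s - (i : ℕ)) ω)
      + ∑ j : Fin q, dotk (𝒞 (-ν₂) (-ν₁) 0 j) (L (s - (j : ℕ)) ω) with hS
  have haff₀ : (μ[g₀|ℱ s]) =ᵐ[μ] fun ω => Real.exp (𝒜 (-ν₂) (-ν₁) 0 + S ω) := by
    refine (haff s (-ν₂) (-ν₁) 0).trans ?_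
    filter_upwards with ω
    rw [hS]; ring_nf
  have haff₁ : (μ[g₁|ℱ s]) =ᵐ[μ] fun ω => Real.exp (r + (𝒜 (-ν₂) (-ν₁) 0 + S ω)) := by
    refine (haff s (1 - ν₂) (-ν₁) 0).trans ?_
    filter_upwards with ω
    simp only [h𝒜, hℬ, h𝒞]
    rw [hS]; ring_nf
  -- the multiplier
  set ψ : Ω → ℝ := fun ω => max ((μ[g₀|ℱ s]) ω)⁻¹ 0 with hψ
  have hψm : StronglyMeasurable[ℱ s] ψ :=
    (stronglyMeasurable_condExp.measurable.inv.max measurable_const).stronglyMeasurable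
  have hψ0 : ∀ ω, 0 ≤ ψ ω := fun ω => le_max_right _ _
  have hψae : ψ =ᵐ[μ] fun ω => (Real.exp (𝒜 (-ν₂) (-ν₁) 0 + S ω))⁻¹ := by
    filter_upwards [haff₀] with ω h0
    rw [hψ]
    simp only [h0]
    exact max_eq_left (le_of_lt (inv_pos.2 (Real.exp_pos _)))
  have hg₁0 : ∀ ω, 0 ≤ g₁ ω := fun ω => (Real.exp_pos _).le
  have hg₁int : Integrable g₁ μ := hint s (1 - ν₂) (-ν₁) 0
  -- ψ ⬝ 𝔼[g₁|ℱ s] = exp r a.e.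
  have hC : (fun ω => ψ ω * (μ[g₁|ℱ s]) ω) =ᵐ[μ] fun _ => Real.exp r := by
    filter_upwards [hψae, haff₁] with ω h1 h2
    rw [h1, h2, ← Real.exp_neg, ← Real.exp_add]
    congr 1
    ring
  have hfint : Integrable (fun ω => ψ ω * g₁ ω) μ :=
    integrable_mul_of_condexp_bound (ℱ.le s) hψm hψ0 hg₁0 hg₁int hC
  have hpull : (μ[fun ω => ψ ω * g₁ ω|ℱ s]) =ᵐ[μ] fun ω => ψ ω * (μ[g₁|ℱ s]) ω :=
    condExp_mul_of_stronglyMeasurable_left hψm hfint hg₁int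
  -- M s ⬝ exp(y (s+1)) = ψ ⬝ g₁ a.e.
  have hMg : (fun ω => M s ω * Real.exp (y (s + 1) ω)) =ᵐ[μ] fun ω => ψ ω * g₁ ω := by
    filter_upwards [hM s, hψae, haff₀] with ω h1 h2 h3
    rw [h1, hg₀eq, h3, h2]
    simp only [hg₁]
    rw [div_eq_mul_inv, ← Real.exp_neg, ← Real.exp_add, ← Real.exp_add,
      ← Real.exp_add]
    congr 1
    simp only [dotk_neg_left, dotk_zero_left]
    ring
  exact (condExp_congr_ae hMg).trans (hpull.trans hC)
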